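/- Let κ = (κ₁,…,κₙ) ∈ Γ_k with κ₁ ≥ ⋯ ≥ κₙ. Then there is a positive constant c(n,k) depending only on n and k such that σ_{k-1}(κ|k) ≥ c(n,k)·σ_{k-1}(κ), where σ_{k-1}(κ|k) denotes the (k-1)-th elementary symmetric polynomial of the (n-1)-tuple obtained from κ by deleting the k-th entry. -/

import Mathlib

noncomputable def esymm (n k : ℕ) (κ : Fin n → ℝ) : ℝ :=
  ∑ s ∈ Finset.powersetCard k (Finset.univ : Finset (Fin n)), ∏ i ∈ s, κ i

noncomputable def esymm1 (n m : ℕ) (κ : Fin n → ℝ) (i : Fin n) : ℝ :=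
  ∑ s ∈ Finset.powersetCard m ((Finset.univ : Finset (Fin n)).erase i), ∏ j ∈ s, κ j

noncomputable def esymm2 (n m : ℕ) (κ : Fin n → ℝ) (i j : Fin n) : ℝ :=
  ∑ s ∈ Finset.powersetCard m (((Finset.univ : Finset (Fin n)).erase i).erase j), ∏ l ∈ s, κ l

def GardingCone (n k : ℕ) : Set (Fin n → ℝ) :=
  {κ | ∀ m, 1 ≤ m → m ≤ k → 0 < esymm n m κ}

namespace EsymmAux
open Multiset Polynomial

lemma esymm_cons (a : ℝ) (s : Multiset ℝ) (m : ℕ) :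
    (a ::ₘ s).esymm (m+1) = s.esymm (m+1) + a * s.esymm m := by
  simp only [Multiset.esymm, powersetCard_cons, Multiset.map_add, Multiset.sum_add,
    Multiset.map_map, Function.comp_def, Multiset.prod_cons]
  rw [Multiset.sum_map_mul_left]

lemma esymm_of_card_lt {s : Multiset ℝ} {m : ℕ} (h : Multiset.card s < m) :
    s.esymm m = 0 := by
  simp [Multiset.esymm, Multiset.powersetCard_eq_empty _ h]

lemma esymm_zero' (s : Multiset ℝ) : s.esymm 0 = 1 := by
  simp [Multiset.esymm, Multiset.powersetCard_zero_left]

lemma esymm_card (s : Multiset ℝ) : s.esymm (Multiset.card s) = s.prod := by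
  induction s using Multiset.induction with
  | empty => simp [esymm_zero']
  | cons a t ih =>
    rw [Multiset.card_cons, esymm_cons, esymm_of_card_lt (by simp), ih, Multiset.prod_cons]
    ring

lemma esymm_nonneg {s : Multiset ℝ} (h : ∀ b ∈ s, 0 ≤ b) (m : ℕ) : 0 ≤ s.esymm m := by
  induction s using Multiset.induction generalizing m with
  | empty =>
    cases m with
    | zero => simp [esymm_zero']
    | succ m =>
      rw [esymm_of_card_lt (by simp)]
  | cons a t ih =>
    cases m with
    | zero => simp [esymm_zero']
    | succ m =>
      rw [esymm_cons]
      have ha : 0 ≤ a := h a (Multiset.mem_cons_self _ _)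
      have ht : ∀ b ∈ t, 0 ≤ b := fun b hb => h b (Multiset.mem_cons_of_mem hb)
      have := ih ht (m+1); have := ih ht m
      positivity

lemma esymm_pos {s : Multiset ℝ} (h : ∀ b ∈ s, 0 < b) {m : ℕ} (hm : m ≤ Multiset.card s) :
    0 < s.esymm m := by
  induction s using Multiset.induction generalizing m with
  | empty =>
    have : m = 0 := by simpa using hm
    subst this; simp [esymm_zero']
  | cons a t ih =>
    cases m with
    | zero => simp [esymm_zero']
    | succ m =>
      rw [esymm_cons]
      have ha : 0 < a := h a (Multiset.mem_cons_self _ _)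
      have ht : ∀ b ∈ t, 0 < b := fun b hb => h b (Multiset.mem_cons_of_mem hb)
      have h1 : 0 ≤ t.esymm (m+1) := esymm_nonneg (fun b hb => (ht b hb).le) _
      have h2 : 0 < t.esymm m := ih ht (by simpa using hm)
      nlinarith

end EsymmAux

namespace EsymmAux

/-- Top-level Newton inequality for a multiset of reals of card `m+1`. -/
lemma tn : ∀ (m : ℕ), 1 ≤ m → ∀ R : Multiset ℝ, Multiset.card R = m + 1 →
    2*((m:ℝ)+1) * (R.esymm (m+1) * R.esymm (m-1)) ≤ (m:ℝ) * (R.esymm m)^2 := by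
  intro m
  induction m with
  | zero => omega
  | succ m ih =>
    intro _ R hR
    obtain ⟨a, t, rfl⟩ : ∃ a t, R = a ::ₘ t := by
      rcases Multiset.card_pos_iff_exists_mem.1 (by omega : 0 < Multiset.card R) with ⟨a, ha⟩
      exact ⟨a, (Multiset.exists_cons_of_mem ha).imp fun t h => h⟩
    have hct : Multiset.card t = m + 1 := by
      have := Multiset.card_cons a t; omega
    rcases Nat.eq_zero_or_pos m with hm | hm
    · -- base : card t = 1
      subst hm
      obtain ⟨b, rfl⟩ : ∃ b, t = {b} := by
        rcases Multiset.card_eq_one.1 hct with ⟨b, rfl⟩; exact ⟨b, rfl⟩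
      have h2 : (a ::ₘ {b}).esymm 2 = a * b := by
        have := esymm_card (a ::ₘ {b})
        simpa using this
      have h1 : (a ::ₘ {b}).esymm 1 = b + a := by
        have hb : ({b} : Multiset ℝ).esymm 1 = b := by simpa using esymm_card {b}
        have := esymm_cons a {b} 0
        rw [esymm_zero'] at this
        simpa [hb] using this
      have h0 : (a ::ₘ {b}).esymm 0 = 1 := esymm_zero' _
      simp only [show (1:ℕ)+1 = 2 from rfl] at *
      rw [h2, h1]
      norm_num
      nlinarith [sq_nonneg (a-b)]
    · -- inductive step
      have hm1 : m - 1 + 1 = m := by omega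
      have e_top : (a ::ₘ t).esymm (m+1+1) = a * t.esymm (m+1) := by
        rw [esymm_cons, esymm_of_card_lt (by omega)]; ring
      have e_mid : (a ::ₘ t).esymm (m+1) = t.esymm (m+1) + a * t.esymm m := esymm_cons a t m
      have e_low : (a ::ₘ t).esymm (m+1-1) = t.esymm m + a * t.esymm (m-1) := by
        have := esymm_cons a t (m-1)
        rw [hm1] at this
        simpa using this
      have IH := ih hm t hct
      set u := t.esymm (m+1) with hu
      set v := t.esymm m with hv
      set w := t.esymm (m-1) with hw
      rw [e_top, e_mid, e_low]
      push_cast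
      push_cast at IH
      nlinarith [sq_nonneg (((m:ℝ)+1)*u - a*v), mul_le_mul_of_nonneg_left IH (sq_nonneg a)]

end EsymmAux

namespace EsymmAux

/-- Newton's inequality (consecutive triple) for arbitrary real multisets. -/
theorem newton (K d : ℕ) (s : Multiset ℝ) (hcard : Multiset.card s = K + 2 + d) :
    ((K:ℝ)+2)*((d:ℝ)+2) * (s.esymm (K+2) * s.esymm K) ≤
      ((K:ℝ)+1)*((d:ℝ)+1) * (s.esymm (K+1))^2 := by
  classical
  set N := K + 2 + d with hN
  set g : Polynomial ℝ := (s.map fun r => Polynomial.X - Polynomial.C r).prod with hg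
  have hg_monic : g.Monic :=
    Polynomial.monic_multiset_prod_of_monic _ _ fun r _ => Polynomial.monic_X_sub_C r
  have hg_deg : g.natDegree = N := by
    rw [hg, Polynomial.natDegree_multiset_prod_X_sub_C_eq_card]; exact hcard
  have hg_roots : g.roots = s := Polynomial.roots_multiset_prod_X_sub_C s
  have hg_coeff : ∀ j, j ≤ N → g.coeff (N - j) = (-1)^j * s.esymm j := by
    intro j hj
    have h1 : N - j ≤ Multiset.card s := by omega
    have this2 := Multiset.prod_X_sub_C_coeff s h1
    rw [hcard] at this2
    have h2 : N - (N - j) = j := by omega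
    rw [h2] at this2
    exact this2
  set h : Polynomial ℝ := Polynomial.derivative^[d] g with hh
  have h_coeff : ∀ r, r ≤ K + 2 →
      h.coeff r = ((r + d).descFactorial d : ℝ) * ((-1)^(K+2-r) * s.esymm (K+2-r)) := by
    intro r hr
    rw [hh, Polynomial.coeff_iterate_derivative, nsmul_eq_mul]
    congr 1
    have : r + d = N - (K + 2 - r) := by omega
    rw [this, hg_coeff _ (by omega)]
  have h_top : h.coeff (K+2) = ((N).descFactorial d : ℝ) := by
    have := h_coeff (K+2) le_rfl
    simp only [Nat.sub_self] at this
    rw [this, esymm_zero']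
    norm_num [hN]
  have hΛpos : (0:ℕ) < N.descFactorial d := by
    rcases Nat.eq_zero_or_pos (N.descFactorial d) with h0 | h0
    · exact absurd (Nat.descFactorial_eq_zero_iff_lt.1 h0) (by omega)
    · exact h0
  have hΛposR : (0:ℝ) < (N.descFactorial d : ℝ) := by exact_mod_cast hΛpos
  have h_ne : h ≠ 0 := by
    intro h0
    rw [h0, Polynomial.coeff_zero] at h_top
    linarith
  have h_deg : h.natDegree = K + 2 := by
    refine le_antisymm ?_ ?_
    · have := Polynomial.natDegree_iterate_derivative g d
      rw [← hh] at this
      omega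
    · exact Polynomial.le_natDegree_of_ne_zero (by rw [h_top]; positivity)
  have h_roots_ge : ∀ j, N - j ≤ Multiset.card (Polynomial.derivative^[j] g).roots := by
    intro j
    induction j with
    | zero => simp [hg_roots, hcard]
    | succ j ihj =>
      have := Polynomial.card_roots_le_derivative (Polynomial.derivative^[j] g)
      rw [← Function.iterate_succ_apply' (⇑Polynomial.derivative) j g] at this
      simp only [Nat.succ_eq_add_one] at this
      omega
  have h_roots_card : Multiset.card h.roots = K + 2 := by
    refine le_antisymm ?_ ?_
    · have := h.card_roots'
      omega
    · have := h_roots_ge d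
      rw [← hh] at this
      omega
  have h_splits : Polynomial.Splits h :=
    Polynomial.splits_iff_card_roots.2 (by rw [h_roots_card, h_deg])
  have h_lead : h.leadingCoeff = ((N).descFactorial d : ℝ) := by
    rw [Polynomial.leadingCoeff, h_deg, h_top]
  have hfact := Polynomial.Splits.eq_prod_roots h_splits
  set R := h.roots with hR
  have hR_coeff : ∀ r, r ≤ K + 2 →
      h.coeff r = ((N).descFactorial d : ℝ) * ((-1)^(K+2-r) * R.esymm (K+2-r)) := by
    intro r hr
    conv_lhs => rw [hfact]
    rw [Polynomial.coeff_C_mul, h_lead]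
    congr 1
    have h1 : r ≤ Multiset.card R := by rw [h_roots_card]; omega
    rw [Multiset.prod_X_sub_C_coeff R h1, h_roots_card]
  have key : ∀ r, r ≤ K + 2 →
      ((r + d).descFactorial d : ℝ) * s.esymm (K+2-r) =
        ((N).descFactorial d : ℝ) * R.esymm (K+2-r) := by
    intro r hr
    have e1 := h_coeff r hr
    have e2 := hR_coeff r hr
    rw [e1] at e2
    have hpow : ((-1:ℝ))^(K+2-r) ≠ 0 := by
      apply pow_ne_zero; norm_num
    refine mul_left_cancel₀ hpow ?_
    linear_combination e2
  have i1 : K + 2 - 1 = K + 1 := by omega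
  have i2 : K + 2 - 2 = K := by omega
  have i0 : K + 2 - 0 = K + 2 := by omega
  have E0 := key 0 (by omega)
  rw [i0] at E0
  have E1 := key 1 (by omega)
  rw [i1] at E1
  have E2 := key 2 (by omega)
  rw [i2] at E2
  have TTN := tn (K+1) (by omega) R (by rw [h_roots_card])
  have i3 : K + 1 - 1 = K := by omega
  rw [i3] at TTN
  set Λ : ℝ := ((N).descFactorial d : ℝ) with hΛ
  have main := mul_le_mul_of_nonneg_left TTN (sq_nonneg Λ)
  have lhs_eq : Λ^2 * (2*((K+1:ℕ):ℝ)+2) * (R.esymm (K+1+1) * R.esymm K) =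
      2*((K:ℝ)+2) * ((Λ * R.esymm (K+2)) * (Λ * R.esymm K)) := by
    push_cast; ring
  -- rewrite main into s-quantities
  have main2 : 2*((K:ℝ)+2) * ((((0+d).descFactorial d : ℕ):ℝ) * s.esymm (K+2) *
      ((((2+d).descFactorial d : ℕ):ℝ) * s.esymm K)) ≤
      ((K:ℝ)+1) * ((((1+d).descFactorial d : ℕ):ℝ) * s.esymm (K+1))^2 := by
    rw [E0, E1, E2]
    simp only [show K+1+1 = K+2 from rfl] at main
    push_cast at main ⊢
    nlinarith [main]
  -- descFactorial values
  have hD0 : ((0+d).descFactorial d : ℕ) = d.factorial := by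
    rw [Nat.zero_add]; exact Nat.descFactorial_self d
  have hD1 : ((1+d).descFactorial d : ℕ) = (d+1).factorial := by
    have h := Nat.descFactorial_succ (d+1) d
    rw [Nat.descFactorial_self] at h
    have : d + 1 - d = 1 := by omega
    rw [this, one_mul] at h
    rw [Nat.add_comm 1 d]
    exact h.symm
  have hD2 : 2 * ((2+d).descFactorial d : ℕ) = (d+2).factorial := by
    have h2 := Nat.descFactorial_succ (d+2) (d+1)
    have h1 := Nat.descFactorial_succ (d+2) d
    rw [Nat.descFactorial_self] at h2
    have e1 : d + 2 - (d+1) = 1 := by omega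
    have e2 : d + 2 - d = 2 := by omega
    rw [e1, one_mul] at h2
    rw [e2] at h1
    rw [Nat.add_comm 2 d]
    omega
  rw [hD0, hD1] at main2
  have hD2' : (((2+d).descFactorial d : ℕ):ℝ) = ((d+2).factorial : ℝ) / 2 := by
    have : ((2 * ((2+d).descFactorial d) : ℕ) : ℝ) = ((d+2).factorial : ℝ) := by
      exact_mod_cast congrArg (Nat.cast : ℕ → ℝ) hD2
    push_cast at this
    linarith
  rw [hD2'] at main2
  have hfac1 : ((d+1).factorial : ℝ) = ((d:ℝ)+1) * (d.factorial : ℝ) := by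
    rw [Nat.factorial_succ]; push_cast; ring
  have hfac2 : ((d+2).factorial : ℝ) = ((d:ℝ)+2) * ((d+1).factorial : ℝ) := by
    rw [show d+2 = (d+1)+1 from rfl, Nat.factorial_succ]; push_cast; ring
  have hF : (0:ℝ) < ((d:ℝ)+1) * (d.factorial : ℝ)^2 := by positivity
  rw [← mul_le_mul_iff_right₀ hF]
  calc ((d:ℝ)+1) * (d.factorial : ℝ)^2 * (((K:ℝ)+2)*((d:ℝ)+2) * (s.esymm (K+2) * s.esymm K))
      = 2*((K:ℝ)+2) * ((d.factorial : ℝ) * s.esymm (K+2) *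
        (((d:ℝ)+2) * (((d:ℝ)+1) * (d.factorial : ℝ)) / 2 * s.esymm K)) := by ring
    _ = 2*((K:ℝ)+2) * ((d.factorial : ℝ) * s.esymm (K+2) *
        (((d+2).factorial : ℝ) / 2 * s.esymm K)) := by rw [hfac2, hfac1]
    _ ≤ ((K:ℝ)+1) * (((d+1).factorial : ℝ) * s.esymm (K+1))^2 := main2
    _ = ((d:ℝ)+1) * (d.factorial : ℝ)^2 * (((K:ℝ)+1)*((d:ℝ)+1) * (s.esymm (K+1))^2) := by
        rw [hfac1]; ring

end EsymmAux

namespace EsymmAux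

-- transfer
lemma esymm_eq (n m : ℕ) (κ : Fin n → ℝ) :
    esymm n m κ = ((Finset.univ : Finset (Fin n)).val.map κ).esymm m :=
  (Finset.esymm_map_val κ _ m).symm

lemma esymm1_eq (n m : ℕ) (κ : Fin n → ℝ) (i : Fin n) :
    esymm1 n m κ i = (((Finset.univ : Finset (Fin n)).erase i).val.map κ).esymm m :=
  (Finset.esymm_map_val κ _ m).symm

lemma map_val_erase {n : ℕ} (A : Finset (Fin n)) (κ : Fin n → ℝ) {j : Fin n} (hj : j ∈ A) :
    A.val.map κ = κ j ::ₘ (A.erase j).val.map κ := by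
  have h1 : (A.erase j).val = A.val.erase j := Finset.erase_val _ _
  rw [h1, ← Multiset.map_cons, Multiset.cons_erase (by exact_mod_cast hj)]

lemma univ_val_map_succ {n : ℕ} (κ : Fin (n+1) → ℝ) :
    ((Finset.univ : Finset (Fin (n+1))).val.map κ) =
      κ (Fin.last n) ::ₘ ((Finset.univ : Finset (Fin n)).val.map (κ ∘ Fin.castSucc)) := by
  rw [Fin.univ_castSuccEmb]
  rw [Finset.cons_val, Multiset.map_cons, Finset.map_val, Multiset.map_map]
  rfl

lemma univ_erase_last {n : ℕ} :
    ((Finset.univ : Finset (Fin (n+1))).erase (Fin.last n)) =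
      Finset.map Fin.castSuccEmb (Finset.univ : Finset (Fin n)) := by
  rw [Fin.univ_castSuccEmb, Finset.erase_cons]

lemma univ_erase_val_map_succ {n : ℕ} (κ : Fin (n+1) → ℝ) (i : Fin n) :
    (((Finset.univ : Finset (Fin (n+1))).erase (Fin.castSucc i)).val.map κ) =
      κ (Fin.last n) ::ₘ (((Finset.univ : Finset (Fin n)).erase i).val.map (κ ∘ Fin.castSucc)) := by
  have hlast : Fin.last n ∈ (Finset.univ : Finset (Fin (n+1))).erase (Fin.castSucc i) :=
    Finset.mem_erase.2 ⟨(Fin.castSucc_lt_last i).ne', Finset.mem_univ _⟩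
  rw [map_val_erase _ κ hlast]
  congr 1
  rw [Finset.erase_right_comm, univ_erase_last,
    show i.castSucc = Fin.castSuccEmb i from rfl, ← Finset.map_erase]
  rw [Finset.map_val, Multiset.map_map]
  rfl

end EsymmAux

namespace EsymmAux

/-- All entries of a multiset with positive elementary symmetric functions (through its
cardinality) are positive. -/
lemma allpos {s : Multiset ℝ} (hpos : ∀ m, 1 ≤ m → m ≤ Multiset.card s → 0 < s.esymm m)
    {b : ℝ} (hb : b ∈ s) : 0 < b := by
  by_contra hble
  push_neg at hble
  set N := Multiset.card s with hN
  have hNpos : 0 < N := by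
    rw [hN]; exact Multiset.card_pos.2 (fun h0 => by simp [h0] at hb)
  have hid := Multiset.prod_X_add_C_eq_sum_esymm s
  have heval := congrArg (Polynomial.eval (-b)) hid
  rw [Polynomial.eval_multiset_prod] at heval
  have hzero : ((s.map fun r => Polynomial.X + Polynomial.C r).map (Polynomial.eval (-b))).prod
      = 0 := by
    apply Multiset.prod_eq_zero
    rw [Multiset.map_map]
    refine Multiset.mem_map.2 ⟨b, hb, ?_⟩
    simp
  rw [hzero] at heval
  have hpos' : 0 < Polynomial.eval (-b)
      (∑ j ∈ Finset.range (N + 1), Polynomial.C (s.esymm j) * Polynomial.X ^ (N - j)) := by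
    rw [Polynomial.eval_finset_sum]
    apply Finset.sum_pos'
    · intro j hj
      simp only [Polynomial.eval_mul, Polynomial.eval_C, Polynomial.eval_pow, Polynomial.eval_X]
      rcases Nat.eq_zero_or_pos j with h0 | h0
      · subst h0
        rw [esymm_zero']
        have : (0:ℝ) ≤ -b := by linarith
        positivity
      · have h1 : 0 < s.esymm j := hpos j h0 (by simp at hj; omega)
        have : (0:ℝ) ≤ -b := by linarith
        positivity
    · refine ⟨N, by simp, ?_⟩
      simp only [Polynomial.eval_mul, Polynomial.eval_C, Polynomial.eval_pow, Polynomial.eval_X,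
        Nat.sub_self, pow_zero, mul_one]
      exact hpos N hNpos le_rfl
  rw [← heval] at hpos'
  exact lt_irrefl _ hpos'

/-- For a nonempty multiset of positive reals all `≥ a > 0`:
`a * e_{c-1}(t) ≤ c * e_c(t)`. -/
lemma cl {a : ℝ} : ∀ t : Multiset ℝ, t ≠ 0 → (∀ b ∈ t, 0 < b) → 0 < a → (∀ b ∈ t, a ≤ b) →
    a * t.esymm (Multiset.card t - 1) ≤ (Multiset.card t : ℝ) * t.esymm (Multiset.card t) := by
  intro t
  induction t using Multiset.induction with
  | empty => intro h; exact absurd rfl h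
  | cons x u ih =>
    intro _ hpos ha hge
    have hx : 0 < x := hpos x (Multiset.mem_cons_self _ _)
    have hax : a ≤ x := hge x (Multiset.mem_cons_self _ _)
    rcases eq_or_ne u 0 with hu | hu
    · subst hu
      simp only [Multiset.card_cons, Multiset.card_zero]
      norm_num [esymm_zero']
      have h1 : ({x} : Multiset ℝ).esymm 1 = x := by
        have := esymm_card ({x} : Multiset ℝ)
        simpa using this
      rw [h1]
      exact hax
    · have hposu : ∀ b ∈ u, 0 < b := fun b hb => hpos b (Multiset.mem_cons_of_mem hb)
      have hgeu : ∀ b ∈ u, a ≤ b := fun b hb => hge b (Multiset.mem_cons_of_mem hb)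
      have IH := ih hu hposu ha hgeu
      have hcu : 1 ≤ Multiset.card u := by
        rcases Multiset.card_pos.2 hu with h; omega
      have hc1 : Multiset.card (x ::ₘ u) - 1 = (Multiset.card u - 1) + 1 := by
        rw [Multiset.card_cons]; omega
      have hprod : u.esymm (Multiset.card u) = u.prod := esymm_card u
      have hprodpos : 0 < u.prod := Multiset.prod_pos hposu
      have e1 : (x ::ₘ u).esymm (Multiset.card (x ::ₘ u) - 1)
          = u.esymm ((Multiset.card u - 1) + 1) + x * u.esymm (Multiset.card u - 1) := by
        rw [hc1, esymm_cons]
      have e2 : (x ::ₘ u).esymm (Multiset.card (x ::ₘ u))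
          = x * u.esymm (Multiset.card u) := by
        rw [Multiset.card_cons, esymm_cons, esymm_of_card_lt (by omega)]
        ring
      rw [e1, e2]
      have hm : Multiset.card u - 1 + 1 = Multiset.card u := by omega
      rw [hm, hprod]
      rw [hprod] at IH
      have hcc : (Multiset.card (x ::ₘ u) : ℝ) = (Multiset.card u : ℝ) + 1 := by
        rw [Multiset.card_cons]; push_cast; ring
      rw [hcc]
      -- a * (prod u + x * e_{c-1}(u)) ≤ (c+1) * (x * prod u)
      have t1 : a * u.prod ≤ x * u.prod := by nlinarith
      have t2 : x * (a * u.esymm (Multiset.card u - 1)) ≤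
          x * ((Multiset.card u : ℝ) * u.prod) := by
        exact mul_le_mul_of_nonneg_left IH hx.le
      nlinarith [t1, t2]

end EsymmAux

namespace EsymmAux

lemma caseB_ineq (Kr nr X Y P Q G W a t c₁ : ℝ)
    (hn : Kr + 2 ≤ nr) (hKr : 0 ≤ Kr)
    (hPpos : 0 < P) (hQpos : 0 < Q) (hGpos : 0 < G)
    (idP : P = X + t*Y) (idG : G = W + t*X)
    (hS1 : 0 < P + a*Q) (hSk : 0 < G + a*P)
    (hIH : c₁*P ≤ X) (hc₁ : 0 < c₁)
    (hAB : X*Q ≤ Y*P)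
    (NT1 : (Kr+2)*(nr-Kr) * (G*Q) ≤ (Kr+1)*(nr-Kr-1) * P^2)
    (NT2 : (Kr+2)*(nr-Kr-1) * (W*Y) ≤ (Kr+1)*(nr-Kr-2) * X^2) :
    c₁^2*nr/((Kr+2)*(nr-Kr-1)) * (P + a*Q) ≤ X + a*Y := by
  have hnr0 : 0 < nr := by linarith
  have hd : 0 < nr - Kr - 1 := by linarith
  have hApos : 0 < (Kr+2)*(nr-Kr-1) := by positivity
  have hXpos : 0 < X := lt_of_lt_of_le (by positivity) hIH
  have key1 : (X*P - G*Y)*(P + a*Q) ≤ (X + a*Y)*(P^2 - G*Q) := by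
    nlinarith [mul_nonneg hSk.le (sub_nonneg.2 hAB)]
  have key2 : X*P - G*Y = X^2 - W*Y := by
    linear_combination X*idP - Y*idG
  have key3 : nr*X^2 ≤ (Kr+2)*(nr-Kr-1)*(X*P - G*Y) := by
    rw [key2]
    nlinarith [NT2]
  have key4 : 0 < P^2 - G*Q := by
    nlinarith [NT1, mul_pos hPpos hPpos, mul_nonneg (mul_nonneg hKr hnr0.le) (mul_pos hPpos hPpos).le,
      mul_nonneg hnr0.le (mul_pos hPpos hPpos).le, mul_nonneg hKr (mul_pos hPpos hPpos).le]
  have key5 : P^2 - G*Q ≤ P^2 := by nlinarith [mul_pos hGpos hQpos]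
  have hx2 : (c₁*P)^2 ≤ X^2 := by
    apply sq_le_sq' (by nlinarith) hIH
  have chain : nr*c₁^2*(P+a*Q)*(P^2-G*Q) ≤ ((Kr+2)*(nr-Kr-1))*((X + a*Y)*(P^2 - G*Q)) := by
    have s1 : ((Kr+2)*(nr-Kr-1))*((X*P - G*Y)*(P + a*Q)) ≤
        ((Kr+2)*(nr-Kr-1))*((X + a*Y)*(P^2 - G*Q)) :=
      mul_le_mul_of_nonneg_left key1 hApos.le
    have s2 : (nr*X^2)*(P+a*Q) ≤ ((Kr+2)*(nr-Kr-1)*(X*P - G*Y))*(P + a*Q) :=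
      mul_le_mul_of_nonneg_right key3 hS1.le
    have s3 : (nr*(c₁*P)^2)*(P+a*Q) ≤ (nr*X^2)*(P+a*Q) := by
      have := mul_le_mul_of_nonneg_left hx2 hnr0.le
      exact mul_le_mul_of_nonneg_right this hS1.le
    have s4 : nr*c₁^2*(P+a*Q)*(P^2-G*Q) ≤ (nr*(c₁*P)^2)*(P+a*Q) := by
      have h1 : (0:ℝ) ≤ nr*c₁^2*(P+a*Q) := mul_nonneg (by positivity) hS1.le
      have h2 := mul_le_mul_of_nonneg_left key5 h1
      calc nr*c₁^2*(P+a*Q)*(P^2-G*Q) ≤ nr*c₁^2*(P+a*Q)*P^2 := h2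
        _ = (nr*(c₁*P)^2)*(P+a*Q) := by ring
    calc nr*c₁^2*(P+a*Q)*(P^2-G*Q) ≤ (nr*(c₁*P)^2)*(P+a*Q) := s4
      _ ≤ (nr*X^2)*(P+a*Q) := s3
      _ ≤ ((Kr+2)*(nr-Kr-1)*(X*P - G*Y))*(P + a*Q) := s2
      _ = ((Kr+2)*(nr-Kr-1))*((X*P - G*Y)*(P + a*Q)) := by ring
      _ ≤ ((Kr+2)*(nr-Kr-1))*((X + a*Y)*(P^2 - G*Q)) := s1
  have final : nr*c₁^2*(P+a*Q) ≤ ((Kr+2)*(nr-Kr-1))*(X + a*Y) := by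
    have hch : (nr*c₁^2*(P+a*Q))*(P^2-G*Q) ≤ (((Kr+2)*(nr-Kr-1))*(X + a*Y))*(P^2-G*Q) := by
      calc (nr*c₁^2*(P+a*Q))*(P^2-G*Q) ≤ ((Kr+2)*(nr-Kr-1))*((X + a*Y)*(P^2 - G*Q)) := chain
        _ = (((Kr+2)*(nr-Kr-1))*(X + a*Y))*(P^2-G*Q) := by ring
    exact le_of_mul_le_mul_right hch key4
  rw [div_mul_eq_mul_div, div_le_iff₀ hApos]
  calc c₁^2*nr*(P+a*Q) = nr*c₁^2*(P+a*Q) := by ring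
    _ ≤ ((Kr+2)*(nr-Kr-1))*(X+a*Y) := final
    _ = (X+a*Y)*((Kr+2)*(nr-Kr-1)) := by ring


set_option maxHeartbeats 1000000 in
theorem aux : ∀ k : ℕ, 1 ≤ k → ∀ n : ℕ, k ≤ n →
    ∃ c : ℝ, 0 < c ∧ ∀ (j : ℕ), j + 1 = k → ∀ (hidx : j < n) (κ : Fin n → ℝ),
      κ ∈ GardingCone n k → Antitone κ →
      esymm1 n j κ ⟨j, hidx⟩ ≥ c * esymm n j κ := by
  intro k
  induction k using Nat.strong_induction_on with
  | _ k ihk =>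
  intro hk1 n hkn
  rcases Nat.lt_or_ge k 2 with hk2 | hk2
  · -- k = 1
    have hk : k = 1 := by omega
    subst hk
    refine ⟨1, one_pos, ?_⟩
    intro j hj hidx κ _ _
    obtain rfl : j = 0 := by omega
    rw [esymm1_eq, esymm_eq]
    simp only [esymm_zero']
    norm_num
  · -- k ≥ 2
    obtain ⟨K, rfl⟩ : ∃ K, k = K + 2 := ⟨k - 2, by omega⟩
    clear hk1 hk2
    induction n, hkn using Nat.le_induction with
    | base =>
      -- n = K + 2 : all entries positive
      refine ⟨1/((K:ℝ)+2), by positivity, ?_⟩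
      intro j hj hidx κ hΓ hanti
      obtain rfl : j = K+1 := by omega
      set i₀ : Fin (K+2) := ⟨K+1, hidx⟩ with hi₀
      set S : Multiset ℝ := (Finset.univ : Finset (Fin (K+2))).val.map κ with hS
      set T : Multiset ℝ := ((Finset.univ : Finset (Fin (K+2))).erase i₀).val.map κ with hT
      have hST : S = κ i₀ ::ₘ T := map_val_erase _ κ (Finset.mem_univ _)
      have hcardS : Multiset.card S = K+2 := by rw [hS]; simp
      have hcardT : Multiset.card T = K+1 := by
        rw [hT]; simp [Finset.card_erase_of_mem]
      have hsym : ∀ m, 1 ≤ m → m ≤ Multiset.card S → 0 < S.esymm m := by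
        intro m h1 h2
        rw [hcardS] at h2
        have := hΓ m h1 h2
        rwa [esymm_eq] at this
      have hposS : ∀ b ∈ S, 0 < b := fun b hb => allpos hsym hb
      have hposT : ∀ b ∈ T, 0 < b := fun b hb =>
        hposS b (by rw [hST]; exact Multiset.mem_cons_of_mem hb)
      have ha : 0 < κ i₀ := hposS _ (by rw [hST]; exact Multiset.mem_cons_self _ _)
      have hgeT : ∀ b ∈ T, κ i₀ ≤ b := by
        intro b hb
        rw [hT] at hb
        obtain ⟨j, _, rfl⟩ := Multiset.mem_map.1 hb
        apply hanti
        have : j.val ≤ K + 1 := by omega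
        exact this
      have hTne : T ≠ 0 := by
        intro h0; rw [h0] at hcardT; simp at hcardT
      have hCL := cl T hTne hposT ha hgeT
      rw [hcardT] at hCL
      simp only [Nat.add_sub_cancel] at hCL
      have hTpos : 0 < T.esymm (K+1) :=
        esymm_pos hposT (by rw [hcardT])
      have hexp : S.esymm (K+1) = T.esymm (K+1) + κ i₀ * T.esymm K := by
        rw [hST]; exact esymm_cons _ _ K
      have hgoal : T.esymm (K+1) ≥ 1/((K:ℝ)+2) * S.esymm (K+1) := by
        rw [hexp]
        rw [ge_iff_le, div_mul_eq_mul_div, div_le_iff₀ (by positivity)]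
        push_cast at hCL ⊢
        nlinarith [hCL, hTpos]
      have e1 : esymm1 (K+2) (K+1) κ i₀ = T.esymm (K+1) := by
        rw [esymm1_eq]
      have e2 : esymm (K+2) (K+1) κ = S.esymm (K+1) := by
        rw [esymm_eq]
      rw [e1, e2]
      exact hgoal
    | succ n hn ihn =>
      obtain ⟨c₁, hc₁, H₁⟩ := ihn
      obtain ⟨c₂, hc₂, H₂⟩ := ihk (K+1) (by omega) (by omega) n (by omega)
      set c₃ : ℝ := c₁^2 * (n:ℝ) / (((K:ℝ)+2) * ((n:ℝ) - (K:ℝ) - 1)) with hc₃def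
      have hnK : (K:ℝ) + 2 ≤ (n:ℝ) := by exact_mod_cast hn
      have hc₃ : 0 < c₃ := by
        rw [hc₃def]
        have h1 : 0 < (n:ℝ) := by linarith
        have h2 : 0 < (n:ℝ) - (K:ℝ) - 1 := by linarith
        positivity
      refine ⟨min (min c₁ (min c₂ 1)) c₃, by positivity, ?_⟩
      set c : ℝ := min (min c₁ (min c₂ 1)) c₃ with hcdef
      have hcc₁ : c ≤ c₁ := le_trans (min_le_left _ _) (min_le_left _ _)
      have hcc₂ : c ≤ min c₂ 1 := le_trans (min_le_left _ _) (min_le_right _ _)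
      have hcc₃ : c ≤ c₃ := min_le_right _ _
      have hc : 0 < c := by positivity
      intro j hj hidx κ hΓ hanti
      obtain rfl : j = K+1 := by omega
      set μ : Fin n → ℝ := κ ∘ Fin.castSucc with hμ
      set a : ℝ := κ (Fin.last n) with haa
      set i₀ : Fin (n+1) := ⟨K+1, hidx⟩ with hi₀
      set i₀' : Fin n := ⟨K+1, by omega⟩ with hi₀'
      have hcast : Fin.castSucc i₀' = i₀ := rfl
      set S : Multiset ℝ := (Finset.univ : Finset (Fin (n+1))).val.map κ with hS
      set T : Multiset ℝ := (Finset.univ : Finset (Fin n)).val.map μ with hT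
      set Si : Multiset ℝ := ((Finset.univ : Finset (Fin (n+1))).erase i₀).val.map κ with hSi
      set Ti : Multiset ℝ := ((Finset.univ : Finset (Fin n)).erase i₀').val.map μ with hTi
      have hSaT : S = a ::ₘ T := univ_val_map_succ κ
      have hSiaTi : Si = a ::ₘ Ti := by
        rw [hSi, ← hcast]
        exact univ_erase_val_map_succ κ i₀'
      have hTt : T = μ i₀' ::ₘ Ti := map_val_erase _ μ (Finset.mem_univ _)
      have hcardT : Multiset.card T = n := by rw [hT]; simp
      have hcardTi : Multiset.card Ti = n - 1 := by
        rw [hTi]; simp [Finset.card_erase_of_mem]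
      have hμanti : Antitone μ := fun i j hij => hanti (Fin.castSucc_le_castSucc_iff.2 hij)
      have hage : ∀ b ∈ T, a ≤ b := by
        intro b hb
        rw [hT] at hb
        obtain ⟨j, _, rfl⟩ := Multiset.mem_map.1 hb
        exact hanti (Fin.le_last _)
      have hSpos : ∀ m, m ≤ K+2 → 0 < S.esymm m := by
        intro m hm
        rcases Nat.eq_zero_or_pos m with h0 | h0
        · subst h0; rw [esymm_zero']; norm_num
        · have := hΓ m h0 hm
          rwa [esymm_eq] at this
      have hTpos : ∀ m, m ≤ K+2 → 0 < T.esymm m := by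
        rcases lt_trichotomy a 0 with ha | ha | ha
        · intro m
          induction m with
          | zero => intro _; rw [esymm_zero']; norm_num
          | succ m ihm =>
            intro hm
            have h1 := hSpos (m+1) hm
            rw [hSaT, esymm_cons] at h1
            have h2 := ihm (by omega)
            nlinarith
        · intro m hm
          rcases Nat.eq_zero_or_pos m with h0 | h0
          · subst h0; rw [esymm_zero']; norm_num
          · obtain ⟨m', rfl⟩ : ∃ m', m = m' + 1 := ⟨m - 1, by omega⟩
            have h1 := hSpos (m'+1) hm
            rw [hSaT, esymm_cons] at h1
            rw [ha] at h1
            simpa using h1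
        · intro m hm
          apply esymm_pos
          · intro b hb
            exact lt_of_lt_of_le ha (hage b hb)
          · omega
      have hμΓ : μ ∈ GardingCone n (K+2) := by
        intro m h1 h2
        rw [esymm_eq]
        exact hTpos m h2
      -- named quantities
      set X : ℝ := Ti.esymm (K+1) with hX
      set P : ℝ := T.esymm (K+1) with hP
      set Y : ℝ := Ti.esymm K with hY
      set Q : ℝ := T.esymm K with hQ
      set G : ℝ := T.esymm (K+2) with hG
      set W : ℝ := Ti.esymm (K+2) with hW
      have hPpos : 0 < P := hTpos (K+1) (by omega)
      have hQpos : 0 < Q := hTpos K (by omega)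
      have hGpos : 0 < G := hTpos (K+2) le_rfl
      have idP : P = X + μ i₀' * Y := by rw [hP, hTt]; exact esymm_cons _ _ K
      have idG : G = W + μ i₀' * X := by rw [hG, hTt]; exact esymm_cons _ _ (K+1)
      have idS : S.esymm (K+1) = P + a * Q := by rw [hSaT]; exact esymm_cons _ _ K
      have idSk : S.esymm (K+2) = G + a * P := by rw [hSaT]; exact esymm_cons _ _ (K+1)
      have idSi : Si.esymm (K+1) = X + a * Y := by rw [hSiaTi]; exact esymm_cons _ _ K
      have hIH : X ≥ c₁ * P := by
        have := H₁ (K+1) rfl (by omega) μ hμΓ hμanti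
        rw [esymm1_eq, esymm_eq] at this
        exact this
      have hS1 : 0 < P + a * Q := by rw [← idS]; exact hSpos (K+1) (by omega)
      have hSk : 0 < G + a * P := by rw [← idSk]; exact hSpos (K+2) le_rfl
      -- reduce goal to multisets
      have e1 : esymm1 (n+1) (K+1) κ i₀ = Si.esymm (K+1) := by
        rw [esymm1_eq]
      have e2 : esymm (n+1) (K+1) κ = S.esymm (K+1) := by
        rw [esymm_eq]
      rw [e1, e2, idSi, idS]
      rcases le_or_gt 0 a with hha | hha
      · -- nonnegative last entry
        have hY2 : min c₂ 1 * Q ≤ Y := by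
          rcases Nat.eq_zero_or_pos K with hK0 | hK0
          · subst hK0
            have : Y = 1 := by rw [hY, esymm_zero']
            have : Q = 1 := by rw [hQ, esymm_zero']
            rw [‹Y = 1›, ‹Q = 1›, mul_one]
            exact min_le_right _ _
          · -- use outer induction at K+1
            set i₁' : Fin n := ⟨K, by omega⟩ with hi₁'
            set D : Multiset ℝ :=
              (((Finset.univ : Finset (Fin n)).erase i₀').erase i₁').val.map μ with hD
            have hTiD : Ti = μ i₁' ::ₘ D := by
              apply map_val_erase
              refine Finset.mem_erase.2 ⟨?_, Finset.mem_univ _⟩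
              intro h
              rw [hi₁', hi₀'] at h
              have := Fin.mk.injEq K (by omega : K < n) (K+1) (by omega) ▸ h
              omega
            set Ti' : Multiset ℝ :=
              ((Finset.univ : Finset (Fin n)).erase i₁').val.map μ with hTi'
            have hTi'D : Ti' = μ i₀' ::ₘ D := by
              rw [hTi', hD, Finset.erase_right_comm]
              apply map_val_erase
              refine Finset.mem_erase.2 ⟨?_, Finset.mem_univ _⟩
              intro h
              rw [hi₁', hi₀'] at h
              have : (K+1 : ℕ) = K := congrArg Fin.val h
              omega
            have hY' : Ti'.esymm K ≥ c₂ * Q := by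
              have hμΓ' : μ ∈ GardingCone n (K+1) := fun m h1 h2 => hμΓ m h1 (by omega)
              have := H₂ K rfl (by omega) μ hμΓ' hμanti
              rw [esymm1_eq, esymm_eq] at this
              exact this
            have hDnn : 0 ≤ D.esymm (K-1) := by
              apply esymm_nonneg
              intro b hb
              rw [hD] at hb
              obtain ⟨j, _, rfl⟩ := Multiset.mem_map.1 hb
              have : a ≤ μ j := hanti (Fin.le_last _)
              linarith
            have hord : μ i₀' ≤ μ i₁' := by
              apply hμanti
              show i₁' ≤ i₀'
              rw [hi₁', hi₀']
              exact Fin.mk_le_mk.2 (by omega)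
            have eK : K = (K-1) + 1 := by omega
            have eY : Y = D.esymm K + μ i₁' * D.esymm (K-1) := by
              rw [hY, hTiD]
              conv_lhs => rw [eK]
              rw [esymm_cons, ← eK]
            have eY' : Ti'.esymm K = D.esymm K + μ i₀' * D.esymm (K-1) := by
              rw [hTi'D]
              conv_lhs => rw [eK]
              rw [esymm_cons, ← eK]
            have : Ti'.esymm K ≤ Y := by
              rw [eY, eY']
              nlinarith [hDnn, hord]
            have h1 : min c₂ 1 * Q ≤ c₂ * Q := by
              apply mul_le_mul_of_nonneg_right (min_le_left _ _) hQpos.le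
            linarith
        have l1 : c * P ≤ c₁ * P := mul_le_mul_of_nonneg_right hcc₁ hPpos.le
        have l2 : c * (a*Q) ≤ min c₂ 1 * (a*Q) :=
          mul_le_mul_of_nonneg_right hcc₂ (by positivity)
        have l3 : min c₂ 1 * (a * Q) ≤ a * Y := by
          have := mul_le_mul_of_nonneg_left hY2 hha
          nlinarith [this]
        rw [ge_iff_le]
        nlinarith [l1, l2, l3, hIH]
      · -- negative last entry
        rcases le_or_gt (Y*P) (X*Q) with hAB | hAB
        · -- case A
          have key : P*(X + a*Y) ≥ X*(P + a*Q) := by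
            nlinarith [mul_nonneg (neg_nonneg.2 hha.le) (sub_nonneg.2 hAB)]
          have h2 : X*(P + a*Q) ≥ c₁*P*(P+a*Q) :=
            mul_le_mul_of_nonneg_right hIH hS1.le
          have h3 : P*(X+a*Y) ≥ P*(c₁*(P+a*Q)) := by nlinarith [key, h2]
          have h4 : X + a*Y ≥ c₁*(P+a*Q) := le_of_mul_le_mul_left h3 hPpos
          have h5 : c*(P+a*Q) ≤ c₁*(P+a*Q) := mul_le_mul_of_nonneg_right hcc₁ hS1.le
          linarith
        · -- case B
          have hd1 : n = K + (n - (K+2)) + 2 := by omega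
          have NT1 : ((K:ℝ)+2)*((n:ℝ)-(K:ℝ)) * (G * Q) ≤
              ((K:ℝ)+1)*((n:ℝ)-(K:ℝ)-1) * P^2 := by
            have := newton K (n - (K+2)) T (by omega)
            have hcast1 : ((n - (K+2) : ℕ) : ℝ) = (n:ℝ) - (K:ℝ) - 2 := by
              push_cast [Nat.cast_sub hn]; ring
            rw [hcast1] at this
            calc ((K:ℝ)+2)*((n:ℝ)-(K:ℝ)) * (G * Q)
                = ((K:ℝ)+2)*(((n:ℝ)-(K:ℝ)-2)+2) * (T.esymm (K+2) * T.esymm K) := by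
                  rw [← hG, ← hQ]; ring_nf
              _ ≤ ((K:ℝ)+1)*(((n:ℝ)-(K:ℝ)-2)+1) * (T.esymm (K+1))^2 := this
              _ = ((K:ℝ)+1)*((n:ℝ)-(K:ℝ)-1) * P^2 := by rw [← hP]; ring_nf
          have NT2 : ((K:ℝ)+2)*((n:ℝ)-(K:ℝ)-1) * (W * Y) ≤
              ((K:ℝ)+1)*((n:ℝ)-(K:ℝ)-2) * X^2 := by
            rcases Nat.lt_or_ge n (K+3) with hsmall | hbig
            · have hn' : n = K+2 := by omega
              have hWzero : W = 0 := by
                rw [hW]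
                apply esymm_of_card_lt
                rw [hcardTi]; omega
              rw [hWzero, hn']
              push_cast
              ring_nf
              nlinarith [sq_nonneg X]
            · have := newton K (n - 1 - (K+2)) Ti (by omega)
              have hcast2 : ((n - 1 - (K+2) : ℕ) : ℝ) = (n:ℝ) - (K:ℝ) - 3 := by
                push_cast [Nat.cast_sub (by omega : K + 2 ≤ n - 1),
                  Nat.cast_sub (by omega : 1 ≤ n)]
                ring
              rw [hcast2] at this
              calc ((K:ℝ)+2)*((n:ℝ)-(K:ℝ)-1) * (W * Y)
                  = ((K:ℝ)+2)*(((n:ℝ)-(K:ℝ)-3)+2) * (Ti.esymm (K+2) * Ti.esymm K) := by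
                    rw [← hW, ← hY]; ring_nf
                _ ≤ ((K:ℝ)+1)*(((n:ℝ)-(K:ℝ)-3)+1) * (Ti.esymm (K+1))^2 := this
                _ = ((K:ℝ)+1)*((n:ℝ)-(K:ℝ)-2) * X^2 := by rw [← hX]; ring_nf
          have happ := caseB_ineq (K:ℝ) (n:ℝ) X Y P Q G W a (μ i₀') c₁
            hnK (by positivity) hPpos hQpos hGpos idP idG hS1 hSk hIH hc₁ hAB.le
            NT1 NT2
          rw [← hc₃def] at happ
          have h5 : c*(P+a*Q) ≤ c₃*(P+a*Q) := mul_le_mul_of_nonneg_right hcc₃ hS1.le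
          rw [ge_iff_le]
          linarith [happ, h5]

end EsymmAux


theorem esymm_remove_k_lower_bound (n k : ℕ) (hk : 1 ≤ k) (hkn : k ≤ n) :
    ∃ c : ℝ, 0 < c ∧
      ∀ κ : Fin n → ℝ, κ ∈ GardingCone n k → Antitone κ →
        esymm1 n (k - 1) κ ⟨k - 1, by omega⟩ ≥ c * esymm n (k - 1) κ := by
  obtain ⟨c, hc, H⟩ := EsymmAux.aux k hk n hkn
  exact ⟨c, hc, fun κ hΓ hanti => H (k-1) (by omega) (by omega) κ hΓ hanti⟩
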